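/- Binary trees with n internal nodes are in bijection with almost-Dyck paths of size n−1, i.e., lattice paths of 2(n−1) steps (1,1) and (1,−1) from (0,0) to (2(n−1),0) whose ordinate never goes below −1. -/

import Mathlib

/-- An almost-Dyck path of size `m`: a lattice path of `2m` steps `(1,1)` and
`(1,-1)` (encoded by `±1`) from `(0,0)` to `(2m,0)` whose ordinate never goes
below `-1`. -/
def IsAlmostDyck (m : ℕ) (l : List ℤ) : Prop :=
  l.length = 2 * m ∧ (∀ x ∈ l, x = 1 ∨ x = -1) ∧ l.sum = 0 ∧
    ∀ i : ℕ, -1 ≤ (l.take i).sum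

open List DyckStep

namespace Stmt14Aux

/-- Convert a Dyck step to `±1`. -/
def toZ : DyckStep → ℤ
  | U => 1
  | D => -1

/-- Convert `±1` to a Dyck step. -/
def fromZ (x : ℤ) : DyckStep := if x = 1 then U else D

@[simp] lemma fromZ_toZ (s : DyckStep) : fromZ (toZ s) = s := by
  cases s <;> simp [toZ, fromZ]

lemma toZ_fromZ {x : ℤ} (h : x = 1 ∨ x = -1) : toZ (fromZ x) = x := by
  rcases h with h | h <;> simp [toZ, fromZ, h]

lemma map_fromZ_toZ (w : List DyckStep) : (w.map toZ).map fromZ = w := by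
  induction w with
  | nil => rfl
  | cons s t ih => simp [ih]

lemma toZ_mem (s : DyckStep) : toZ s = 1 ∨ toZ s = -1 := by cases s <;> simp [toZ]

lemma sum_map_toZ (w : List DyckStep) :
    (w.map toZ).sum = (w.count U : ℤ) - w.count D := by
  induction w with
  | nil => simp
  | cons s t ih =>
    cases s <;> simp [toZ, ih, count_cons] <;> ring

/-- The middle part of a Dyck word, as a `±1` list. -/
def mid (p : DyckWord) : List ℤ := p.toList.dropLast.tail.map toZ

/-- The key decomposition: a nonempty Dyck word, as a `±1` list, is
`1 :: middle ++ [-1]`. -/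
lemma decomp (p : DyckWord) (hp : p ≠ 0) :
    p.toList.map toZ = 1 :: (mid p ++ [-1]) := by
  conv_lhs => rw [← p.cons_tail_dropLast_concat hp]
  simp [mid, toZ]

lemma take_sum_nonneg (p : DyckWord) (i : ℕ) : 0 ≤ ((p.toList.map toZ).take i).sum := by
  rw [← List.map_take, sum_map_toZ]
  have := p.count_D_le_count_U i
  omega

/-- Forward direction of the second equivalence. -/
lemma forward (n : ℕ) (hn : 1 ≤ n) (p : DyckWord) (hps : p.semilength = n) :
    IsAlmostDyck (n - 1) (mid p) := by
  have hp : p ≠ 0 := by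
    intro h0; rw [h0] at hps; simp at hps; omega
  have hd := decomp p hp
  have hlen : (p.toList.map toZ).length = 2 * n := by
    have := p.two_mul_semilength_eq_length
    rw [hps] at this
    simpa using this.symm
  have hlenl : (mid p).length = 2 * (n - 1) := by
    have h5 := congrArg List.length hd
    rw [hlen] at h5
    simp only [List.length_cons, List.length_append, List.length_singleton, List.length_nil] at h5
    omega
  have hsum : (p.toList.map toZ).sum = 0 := by
    rw [sum_map_toZ, p.count_U_eq_count_D]; ring
  have hsuml : (mid p).sum = 0 := by
    rw [hd] at hsum; simp at hsum; omega
  refine ⟨hlenl, ?_, hsuml, ?_⟩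
  · intro x hx
    have : x ∈ p.toList.map toZ := by
      rw [hd]; right; exact List.mem_append_left _ hx
    obtain ⟨s, -, rfl⟩ := List.mem_map.mp this
    exact toZ_mem s
  · intro i
    rcases le_or_gt i (mid p).length with hi | hi
    · have h1 : (p.toList.map toZ).take (i + 1) = 1 :: (mid p).take i := by
        rw [hd, List.take_succ_cons, List.take_append_of_le_length hi]
      have h2 := take_sum_nonneg p (i + 1)
      rw [h1] at h2
      simp only [List.sum_cons] at h2
      omega
    · rw [List.take_of_length_le hi.le, hsuml]; norm_num

/-- Inverse: wrap an almost-Dyck path to a Dyck word. -/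
def wrap (m : ℕ) (l : List ℤ) (h : IsAlmostDyck m l) : DyckWord where
  toList := (1 :: (l ++ [-1])).map fromZ
  count_U_eq_count_D := by
    obtain ⟨hlen, hmem, hsum, hpre⟩ := h
    set w := (1 :: (l ++ [-1])).map fromZ with hw
    have hz : w.map toZ = 1 :: (l ++ [-1]) := by
      rw [hw, List.map_map]
      rw [List.map_congr_left, List.map_id]
      intro x hx
      simp only [Function.comp_apply]
      apply toZ_fromZ
      rcases List.mem_cons.mp hx with rfl | hx
      · left; rfl
      rcases List.mem_append.mp hx with hx | hx
      · exact hmem x hx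
      · right; simpa using hx
    have h1 := sum_map_toZ w
    rw [hz] at h1
    simp only [List.sum_cons, List.sum_append, List.sum_singleton, List.sum_nil, hsum] at h1
    omega
  count_D_le_count_U i := by
    obtain ⟨hlen, hmem, hsum, hpre⟩ := h
    set w := (1 :: (l ++ [-1])).map fromZ with hw
    have hz : (w.take i).map toZ = (1 :: (l ++ [-1])).take i := by
      rw [hw, ← List.map_take, List.map_map]
      rw [List.map_congr_left, List.map_id]
      intro x hx
      have hx' : x ∈ 1 :: (l ++ [-1]) := List.mem_of_mem_take hx
      simp only [Function.comp_apply]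
      apply toZ_fromZ
      rcases List.mem_cons.mp hx' with rfl | hx'
      · left; rfl
      rcases List.mem_append.mp hx' with hx' | hx'
      · exact hmem x hx'
      · right; simpa using hx'
    have h1 := sum_map_toZ (w.take i)
    rw [hz] at h1
    have h2 : 0 ≤ ((1 :: (l ++ [-1])).take i).sum := by
      cases i with
      | zero => simp
      | succ j =>
        rw [List.take_succ_cons]
        simp only [List.sum_cons]
        rcases le_or_gt j l.length with hj | hj
        · rw [List.take_append_of_le_length hj]
          have := hpre j
          omega
        · rw [List.take_of_length_le (by simp; omega), List.sum_append, hsum]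
          simp
    omega

lemma wrap_toList (m : ℕ) (l : List ℤ) (h : IsAlmostDyck m l) :
    (wrap m l h).toList = (1 :: (l ++ [-1])).map fromZ := rfl

lemma wrap_map_toZ (m : ℕ) (l : List ℤ) (h : IsAlmostDyck m l) :
    (wrap m l h).toList.map toZ = 1 :: (l ++ [-1]) := by
  rw [wrap_toList, List.map_map, List.map_congr_left, List.map_id]
  intro x hx
  simp only [Function.comp_apply]
  apply toZ_fromZ
  rcases List.mem_cons.mp hx with rfl | hx
  · left; rfl
  rcases List.mem_append.mp hx with hx | hx
  · exact h.2.1 x hx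
  · right; simpa using hx

lemma wrap_semilength (n : ℕ) (hn : 1 ≤ n) (l : List ℤ) (h : IsAlmostDyck (n - 1) l) :
    (wrap (n - 1) l h).semilength = n := by
  have h2 := (wrap (n - 1) l h).two_mul_semilength_eq_length
  have h3 : (wrap (n - 1) l h).toList.length = 2 * n := by
    have h4 := congrArg List.length (wrap_map_toZ (n - 1) l h)
    simp only [List.length_map, List.length_cons, List.length_append,
      List.length_singleton, List.length_nil] at h4
    have h5 := h.1
    omega
  omega

lemma mid_wrap (m : ℕ) (l : List ℤ) (h : IsAlmostDyck m l) : mid (wrap m l h) = l := by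
  have h1 : (wrap m l h).toList.dropLast.tail.map toZ
      = ((wrap m l h).toList.map toZ).dropLast.tail := by
    rw [List.map_tail, List.map_dropLast]
  rw [mid, h1, wrap_map_toZ,
    show (1 :: (l ++ [-1]) : List ℤ) = (1 :: l) ++ [-1] by simp,
    List.dropLast_concat]
  rfl

end Stmt14Aux

open Stmt14Aux in
/-- for `n ≥ 1`, binary trees with `n` internal nodes are in
bijection with almost-Dyck paths of size `n - 1`. -/
theorem stmt14 (n : ℕ) (hn : 1 ≤ n) :
    Nonempty ({t : Tree Unit // t.numNodes = n} ≃
      {l : List ℤ // IsAlmostDyck (n - 1) l}) := by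
  let e1 : {t : Tree Unit // t.numNodes = n} ≃ {p : DyckWord // p.semilength = n} :=
    (Equiv.subtypeEquiv DyckWord.equivTree
      (fun p => by rw [DyckWord.equivTree_apply, Tree.numNodes, DyckWord.semilength_eq_numNodes_equivTree])).symm
  let e2 : {p : DyckWord // p.semilength = n} ≃ {l : List ℤ // IsAlmostDyck (n - 1) l} := {
      toFun := fun ⟨p, hp⟩ => ⟨mid p, forward n hn p hp⟩
      invFun := fun ⟨l, hl⟩ => ⟨wrap (n - 1) l hl, wrap_semilength n hn l hl⟩
      left_inv := fun ⟨p, hp⟩ => by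
        have hp0 : p ≠ 0 := by
          intro h0; rw [h0] at hp; simp at hp; omega
        apply Subtype.ext
        apply DyckWord.ext
        rw [wrap_toList, ← decomp p hp0]
        exact map_fromZ_toZ p.toList
      right_inv := fun ⟨l, hl⟩ => by
        apply Subtype.ext
        exact mid_wrap (n - 1) l hl }
  exact ⟨e1.trans e2⟩
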